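/- arXiv:1311.2488 — 2 statements merged into one kernel-verified Lean document; each statement's English description precedes it below -/
import Mathlib

section
/- Let p : ℝ → ℝ be a polynomial of degree at most 2 and for integers j ≥ 0, k ∈ ℤ let P_{j,k} := 2^j ∫_{2^{−j}k}^{2^{−j}(k+1)} p(x) dx denote its dyadic cell averages. Then the third-order prediction reproduces the fine cell averages exactly: P_{j+1,2k} = P_{j,k} + (1/8)(P_{j,k−1} − P_{j,k+1}) and P_{j+1,2k+1} = P_{j,k} + (1/8)(P_{j,k+1} − P_{j,k−1}) for all j ≥ 0 and k ∈ ℤ. -/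
lemma integral_quadratic (c0 c1 c2 : ℝ) (a b : ℝ) :
    ∫ x in a..b, (c0 + c1 * x + c2 * x ^ 2) =
      c0 * (b - a) + c1 * (b ^ 2 - a ^ 2) / 2 + c2 * (b ^ 3 - a ^ 3) / 3 := by
  have I0 : IntervalIntegrable (fun _ : ℝ => c0) MeasureTheory.volume a b :=
    intervalIntegrable_const
  have I1 : IntervalIntegrable (fun x : ℝ => c1 * x) MeasureTheory.volume a b :=
    (continuous_const.mul continuous_id).intervalIntegrable a b
  have I2 : IntervalIntegrable (fun x : ℝ => c2 * x ^ 2) MeasureTheory.volume a b :=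
    (continuous_const.mul (continuous_pow 2)).intervalIntegrable a b
  rw [intervalIntegral.integral_add (I0.add I1) I2, intervalIntegral.integral_add I0 I1,
    intervalIntegral.integral_const, intervalIntegral.integral_const_mul,
    intervalIntegral.integral_const_mul, integral_id, integral_pow]
  push_cast
  simp only [smul_eq_mul]
  ring

set_option maxHeartbeats 1000000 in
/-- The third-order prediction operator reproduces exactly the dyadic cell
averages of any polynomial of degree at most 2. -/
theorem prediction_exact_for_quadratics
    (p : Polynomial ℝ) (hp : p.natDegree ≤ 2) (P : ℕ → ℤ → ℝ)
    (hP : ∀ (j : ℕ) (k : ℤ),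
      P j k = 2 ^ j *
        ∫ x in ((2:ℝ) ^ (-(j:ℤ)) * k)..((2:ℝ) ^ (-(j:ℤ)) * (k + 1)), p.eval x) :
    ∀ (j : ℕ) (k : ℤ),
      P (j + 1) (2 * k) = P j k + (1/8) * (P j (k - 1) - P j (k + 1)) ∧
      P (j + 1) (2 * k + 1) = P j k + (1/8) * (P j (k + 1) - P j (k - 1)) := by
  set c0 := p.coeff 0
  set c1 := p.coeff 1
  set c2 := p.coeff 2
  have heval : ∀ x : ℝ, p.eval x = c0 + c1 * x + c2 * x ^ 2 := by
    intro x
    rw [Polynomial.eval_eq_sum_range' (Nat.lt_succ_of_le hp)]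
    simp [Finset.sum_range_succ]
    rfl
  have hz : ∀ j : ℕ, (2:ℝ) ^ (-(j:ℤ)) = ((2:ℝ) ^ j)⁻¹ := fun j => by
    rw [zpow_neg, zpow_natCast]
  have key : ∀ (j : ℕ) (k : ℤ),
      P j k = 2 ^ j * (c0 * ((((2:ℝ) ^ j)⁻¹ * (k + 1)) - ((2:ℝ) ^ j)⁻¹ * k)
        + c1 * ((((2:ℝ) ^ j)⁻¹ * (k + 1)) ^ 2 - (((2:ℝ) ^ j)⁻¹ * k) ^ 2) / 2
        + c2 * ((((2:ℝ) ^ j)⁻¹ * (k + 1)) ^ 3 - (((2:ℝ) ^ j)⁻¹ * k) ^ 3) / 3) := by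
    intro j k
    rw [hP j k, hz]
    congr 1
    rw [intervalIntegral.integral_congr (g := fun x => c0 + c1 * x + c2 * x ^ 2)
      (fun x _ => heval x)]
    exact integral_quadratic c0 c1 c2 _ _
  intro j k
  have h2 : ((2:ℝ) ^ j) ≠ 0 := by positivity
  constructor <;>
  · rw [key, key j k, key j (k-1), key j (k+1)]
    push_cast [pow_succ]
    field_simp
    ring
end

section
/- There exists a constant C > 0 such that for every three-times continuously differentiable function f : ℝ → ℝ whose third derivative is bounded, with M := sup_x |f'''(x)|, and for all integers j ≥ 0, k ∈ ℤ, the details of the third-order prediction applied to the dyadic cell averages of f satisfy |f_{j+1,2k} − f̂_{j+1,2k}| ≤ C · M · 2^{−3j} and |f_{j+1,2k+1} − f̂_{j+1,2k+1}| ≤ C · M · 2^{−3j}, where f̂_{j+1,·} is the third-order prediction computed from the coarse cell averages (f_{j,k})_k. -/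
open intervalIntegral Set

lemma abs_sub_le_of_mem_uIoc {c x t : ℝ} (ht : t ∈ Set.uIoc c x) : |t - c| ≤ |x - c| := by
  rw [Set.uIoc] at ht
  obtain ⟨h1, h2⟩ := ht
  rcases le_total c x with h | h
  · rw [min_eq_left h] at h1; rw [max_eq_right h] at h2
    rw [abs_of_nonneg (by linarith), abs_of_nonneg (by linarith)]; linarith
  · rw [min_eq_right h] at h1; rw [max_eq_left h] at h2
    rw [abs_of_nonpos (by linarith), abs_of_nonpos (by linarith)]; linarith

lemma taylor2_bound (f : ℝ → ℝ) (M : ℝ) (hf : ContDiff ℝ 3 f)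
    (hM : ∀ x, |iteratedDeriv 3 f x| ≤ M) (c x : ℝ) :
    |f x - (f c + deriv f c * (x - c) + deriv (deriv f) c * (x - c)^2 / 2)| ≤ M * |x - c|^3 := by
  set f1 := deriv f with hf1
  set f2 := deriv (deriv f) with hf2
  set f3 := iteratedDeriv 3 f with hf3
  have hiter : f3 = deriv f2 := by
    simp only [hf3, iteratedDeriv_succ, iteratedDeriv_succ, iteratedDeriv_succ, iteratedDeriv_zero]
    rfl
  have hc3 : Continuous f3 := by
    have := (hf.iterate_deriv' 0 3).continuous
    simpa [hf3, iteratedDeriv_eq_iterate] using this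
  have hcd2 : ContDiff ℝ 1 f2 := by
    have := hf.iterate_deriv' 1 2
    simpa [hf2, Function.iterate_succ, Function.comp] using this
  have hcd1 : ContDiff ℝ 2 f1 := by
    have := hf.iterate_deriv' 2 1
    simpa [hf1] using this
  have hc2 : Continuous f2 := hcd2.continuous
  have hc1 : Continuous f1 := hcd1.continuous
  have hd2 : ∀ t, HasDerivAt f2 (f3 t) t := by
    intro t
    rw [hiter]
    exact (hcd2.differentiable one_ne_zero t).hasDerivAt
  have hd1 : ∀ t, HasDerivAt f1 (f2 t) t := by
    intro t
    exact (hcd1.differentiable two_ne_zero t).hasDerivAt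
  have hd0 : ∀ t, HasDerivAt f (f1 t) t := by
    intro t
    exact ((hf.differentiable (by norm_num)) t).hasDerivAt
  -- step 1 : |f2 t - f2 c| ≤ M * |t - c|
  have step1 : ∀ t : ℝ, |f2 t - f2 c| ≤ M * |t - c| := by
    intro t
    have heq : ∫ s in c..t, f3 s = f2 t - f2 c :=
      integral_eq_sub_of_hasDerivAt (fun s _ => hd2 s) (hc3.intervalIntegrable c t)
    rw [← heq, ← Real.norm_eq_abs]
    exact intervalIntegral.norm_integral_le_of_norm_le_const
      (fun s _ => by rw [Real.norm_eq_abs]; exact hM s)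
  -- step 2
  have step2 : ∀ t : ℝ, |f1 t - f1 c - f2 c * (t - c)| ≤ M * |t - c| ^ 2 := by
    intro t
    set g1 := fun s : ℝ => f1 s - f1 c - f2 c * (s - c) with hg1
    have hdg : ∀ s, HasDerivAt g1 (f2 s - f2 c) s := by
      intro s
      have h1 : HasDerivAt (fun s : ℝ => f2 c * (s - c)) (f2 c) s := by
        simpa using ((hasDerivAt_id s).sub_const c).const_mul (f2 c)
      exact ((hd1 s).sub_const (f1 c)).sub h1
    have heq : ∫ s in c..t, (f2 s - f2 c) = g1 t - g1 c :=
      integral_eq_sub_of_hasDerivAt (fun s _ => hdg s)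
        ((hc2.sub continuous_const).intervalIntegrable c t)
    have hgc : g1 c = 0 := by simp [hg1]
    have : |g1 t| ≤ (M * |t - c|) * |t - c| := by
      rw [show g1 t = g1 t - g1 c by rw [hgc]; ring, ← heq, ← Real.norm_eq_abs]
      exact intervalIntegral.norm_integral_le_of_norm_le_const
        (fun s hs => le_trans ((Real.norm_eq_abs _).le.trans (step1 s)) (by
          have := abs_sub_le_of_mem_uIoc hs
          have hM0 : 0 ≤ M := le_trans (abs_nonneg _) (hM 0)
          exact mul_le_mul_of_nonneg_left this hM0))
    calc |f1 t - f1 c - f2 c * (t - c)| = |g1 t| := rfl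
    _ ≤ (M * |t - c|) * |t - c| := this
    _ = M * |t - c| ^ 2 := by ring
  -- step 3
  set g := fun s : ℝ => f s - (f c + f1 c * (s - c) + f2 c * (s - c)^2 / 2) with hg
  have hdg : ∀ s, HasDerivAt g (f1 s - f1 c - f2 c * (s - c)) s := by
    intro s
    have h1 : HasDerivAt (fun s : ℝ => f c + f1 c * (s - c) + f2 c * (s - c)^2 / 2)
        (f1 c + f2 c * (s - c)) s := by
      have hA : HasDerivAt (fun s : ℝ => f1 c * (s - c)) (f1 c) s := by
        simpa using ((hasDerivAt_id s).sub_const c).const_mul (f1 c)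
      have hB : HasDerivAt (fun s : ℝ => f2 c * (s - c)^2 / 2) (f2 c * (s - c)) s := by
        have := (((hasDerivAt_id s).sub_const c).pow 2).const_mul (f2 c)
        have h2 := this.div_const 2
        exact h2.congr_deriv (by simp; ring)
      exact (((hasDerivAt_const s (f c)).add hA).add hB).congr_deriv (by ring)
    have := (hd0 s).sub h1
    exact this.congr_deriv (by ring)
  have hgc : g c = 0 := by simp [hg]
  have hcg1 : Continuous fun s : ℝ => f1 s - f1 c - f2 c * (s - c) := by fun_prop
  have heq : ∫ s in c..x, (f1 s - f1 c - f2 c * (s - c)) = g x - g c :=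
    integral_eq_sub_of_hasDerivAt (fun s _ => hdg s) (hcg1.intervalIntegrable c x)
  have hbound : |g x| ≤ (M * |x - c| ^ 2) * |x - c| := by
    rw [show g x = g x - g c by rw [hgc]; ring, ← heq, ← Real.norm_eq_abs]
    refine intervalIntegral.norm_integral_le_of_norm_le_const (fun s hs => ?_)
    rw [Real.norm_eq_abs]
    refine le_trans (step2 s) ?_
    have h1 := abs_sub_le_of_mem_uIoc hs
    have hM0 : 0 ≤ M := le_trans (abs_nonneg _) (hM 0)
    have h2 : |s - c| ^ 2 ≤ |x - c| ^ 2 := pow_le_pow_left₀ (abs_nonneg _) h1 2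
    exact mul_le_mul_of_nonneg_left h2 hM0
  calc |f x - (f c + deriv f c * (x - c) + deriv (deriv f) c * (x - c)^2 / 2)| = |g x| := rfl
  _ ≤ (M * |x - c| ^ 2) * |x - c| := hbound
  _ = M * |x - c| ^ 3 := by ring
/-- The dyadic cell average of `f : ℝ → ℝ` over the cell `Ω_{j,k} = (2⁻ʲk, 2⁻ʲ(k+1))`. -/
noncomputable def cellAvg (f : ℝ → ℝ) (j : ℕ) (k : ℤ) : ℝ :=
  2 ^ j * ∫ x in ((2:ℝ) ^ (-(j:ℤ)) * k)..((2:ℝ) ^ (-(j:ℤ)) * (k + 1)), f x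

lemma quad_integral (a b e u v : ℝ) :
    ∫ x in u..v, (a + b*x + e*x^2) = a*(v-u) + b*(v^2-u^2)/2 + e*(v^3-u^3)/3 := by
  have i1 : IntervalIntegrable (fun _ : ℝ => a) MeasureTheory.volume u v :=
    (continuous_const).intervalIntegrable u v
  have i2 : IntervalIntegrable (fun x : ℝ => b * x) MeasureTheory.volume u v :=
    (continuous_const.mul continuous_id).intervalIntegrable u v
  have i3 : IntervalIntegrable (fun x : ℝ => e * x^2) MeasureTheory.volume u v :=
    (continuous_const.mul (continuous_pow 2)).intervalIntegrable u v
  rw [intervalIntegral.integral_add (i1.add i2) i3, intervalIntegral.integral_add i1 i2,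
    intervalIntegral.integral_const, intervalIntegral.integral_const_mul,
    intervalIntegral.integral_const_mul, integral_id, integral_pow]
  simp only [smul_eq_mul]
  push_cast
  ring

lemma cellAvg_quad (a b e : ℝ) (j : ℕ) (k : ℤ) :
    cellAvg (fun x => a + b*x + e*x^2) j k =
      a + b * (2:ℝ)^(-(j:ℤ)) * (2*(k:ℝ)+1)/2
        + e * ((2:ℝ)^(-(j:ℤ)))^2 * (3*(k:ℝ)^2+3*(k:ℝ)+1)/3 := by
  unfold cellAvg
  rw [quad_integral]
  have hp : ((2:ℝ)^j : ℝ) = ((2:ℝ)^(-(j:ℤ)))⁻¹ := by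
    rw [zpow_neg, inv_inv, zpow_natCast]
  rw [hp]
  have h0 : (2:ℝ)^(-(j:ℤ)) ≠ 0 := by positivity
  field_simp
  ring

lemma detail_quad (a b e : ℝ) (j : ℕ) (k : ℤ) :
    (cellAvg (fun x => a + b*x + e*x^2) (j+1) (2*k) -
      (cellAvg (fun x => a + b*x + e*x^2) j k +
       (1/8) * (cellAvg (fun x => a + b*x + e*x^2) j (k-1) -
                cellAvg (fun x => a + b*x + e*x^2) j (k+1))) = 0) ∧
    (cellAvg (fun x => a + b*x + e*x^2) (j+1) (2*k+1) -
      (cellAvg (fun x => a + b*x + e*x^2) j k +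
       (1/8) * (cellAvg (fun x => a + b*x + e*x^2) j (k+1) -
                cellAvg (fun x => a + b*x + e*x^2) j (k-1))) = 0) := by
  have hstep : (2:ℝ)^(-((j+1:ℕ)):ℤ) = (2:ℝ)^(-(j:ℤ))/2 := by
    push_cast
    rw [neg_add, zpow_add₀ (two_ne_zero), zpow_neg_one]
    ring
  constructor <;>
  · rw [cellAvg_quad, cellAvg_quad, cellAvg_quad, cellAvg_quad, hstep]
    push_cast
    ring

lemma cellAvg_abs_le (g : ℝ → ℝ) (j : ℕ) (k : ℤ) (B : ℝ)
    (hB : ∀ x ∈ Set.uIoc ((2:ℝ)^(-(j:ℤ))*(k:ℝ)) ((2:ℝ)^(-(j:ℤ))*((k:ℝ)+1)), |g x| ≤ B) :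
    |cellAvg g j k| ≤ B := by
  unfold cellAvg
  have h0 : (0:ℝ) < (2:ℝ)^(-(j:ℤ)) := by positivity
  have h1 : |∫ x in ((2:ℝ)^(-(j:ℤ))*(k:ℝ))..((2:ℝ)^(-(j:ℤ))*((k:ℝ)+1)), g x| ≤
      B * |(2:ℝ)^(-(j:ℤ))*((k:ℝ)+1) - (2:ℝ)^(-(j:ℤ))*(k:ℝ)| := by
    rw [← Real.norm_eq_abs]
    exact intervalIntegral.norm_integral_le_of_norm_le_const
      (fun x hx => by rw [Real.norm_eq_abs]; exact hB x hx)
  have h2 : |(2:ℝ)^(-(j:ℤ))*((k:ℝ)+1) - (2:ℝ)^(-(j:ℤ))*(k:ℝ)| = (2:ℝ)^(-(j:ℤ)) := by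
    rw [show (2:ℝ)^(-(j:ℤ))*((k:ℝ)+1) - (2:ℝ)^(-(j:ℤ))*(k:ℝ) = (2:ℝ)^(-(j:ℤ)) by ring,
      abs_of_pos h0]
  rw [h2] at h1
  have hpj : (0:ℝ) < (2:ℝ)^j := by positivity
  have hone : (2:ℝ)^j * (2:ℝ)^(-(j:ℤ)) = 1 := by
    rw [← zpow_natCast (2:ℝ) j, ← zpow_add₀ (two_ne_zero)]
    simp
  calc |2^j * ∫ x in ((2:ℝ)^(-(j:ℤ))*(k:ℝ))..((2:ℝ)^(-(j:ℤ))*((k:ℝ)+1)), g x|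
      = (2:ℝ)^j * |∫ x in ((2:ℝ)^(-(j:ℤ))*(k:ℝ))..((2:ℝ)^(-(j:ℤ))*((k:ℝ)+1)), g x| := by
        rw [abs_mul, abs_of_pos hpj]
    _ ≤ (2:ℝ)^j * (B * (2:ℝ)^(-(j:ℤ))) := mul_le_mul_of_nonneg_left h1 hpj.le
    _ = B * ((2:ℝ)^j * (2:ℝ)^(-(j:ℤ))) := by ring
    _ = B := by rw [hone, mul_one]

lemma mem_uIoc_bound {u v c hh x : ℝ} (hmem : x ∈ Set.uIoc u v) (huv : u ≤ v)
    (h1 : c - 2*hh ≤ u) (h2 : v ≤ c + 2*hh) : |x - c| ≤ 2*hh := by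
  rw [Set.uIoc_of_le huv] at hmem
  obtain ⟨ha, hb⟩ := hmem
  rw [abs_le]
  constructor <;> linarith

set_option maxHeartbeats 1600000 in
/-- Third-order decay of the details of the third-order prediction applied to
the dyadic cell averages of a thrice continuously differentiable function with
bounded third derivative. -/
theorem detail_decay_third_order :
    ∃ C > (0:ℝ), ∀ (f : ℝ → ℝ) (M : ℝ), ContDiff ℝ 3 f →
      (∀ x, |iteratedDeriv 3 f x| ≤ M) → ∀ (j : ℕ) (k : ℤ),
      |cellAvg f (j + 1) (2 * k) -
          (cellAvg f j k + (1/8) * (cellAvg f j (k - 1) - cellAvg f j (k + 1)))| ≤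
        C * M * (2:ℝ) ^ (-(3 * j : ℤ)) ∧
      |cellAvg f (j + 1) (2 * k + 1) -
          (cellAvg f j k + (1/8) * (cellAvg f j (k + 1) - cellAvg f j (k - 1)))| ≤
        C * M * (2:ℝ) ^ (-(3 * j : ℤ)) := by
  refine ⟨18, by norm_num, ?_⟩
  intro f M hf hM j k
  have hM0 : 0 ≤ M := le_trans (abs_nonneg _) (hM 0)
  set h : ℝ := (2:ℝ)^(-(j:ℤ)) with hh
  have h0 : (0:ℝ) < h := by positivity
  set c : ℝ := h * (k:ℝ) with hc
  set aa : ℝ := f c - deriv f c * c + deriv (deriv f) c * c^2/2 with haa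
  set bb : ℝ := deriv f c - deriv (deriv f) c * c with hbb
  set ee : ℝ := deriv (deriv f) c / 2 with hee
  set q : ℝ → ℝ := fun x => aa + bb*x + ee*x^2 with hq
  set g : ℝ → ℝ := fun x => f x - q x with hgdef
  have hgb : ∀ x, |g x| ≤ M * |x - c|^3 := by
    intro x
    rw [hgdef]
    simp only [hq]
    have : aa + bb*x + ee*x^2
        = f c + deriv f c * (x - c) + deriv (deriv f) c * (x - c)^2 / 2 := by
      rw [haa, hbb, hee]; ring
    rw [this]
    exact taylor2_bound f M hf hM c x
  have hqcont : Continuous q := by rw [hq]; fun_prop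
  have hsub : ∀ (j' : ℕ) (k' : ℤ),
      cellAvg g j' k' = cellAvg f j' k' - cellAvg q j' k' := by
    intro j' k'
    rw [hgdef]
    unfold cellAvg
    rw [intervalIntegral.integral_sub (hf.continuous.intervalIntegrable _ _)
      (hqcont.intervalIntegrable _ _)]
    ring
  have hstep : (2:ℝ)^(-((j+1:ℕ)):ℤ) = h/2 := by
    rw [hh]
    push_cast
    rw [neg_add, zpow_add₀ (two_ne_zero), zpow_neg_one]
    ring
  have key : ∀ (j' : ℕ) (k' : ℤ),
      (∀ x ∈ Set.uIoc ((2:ℝ)^(-(j':ℤ))*(k':ℝ)) ((2:ℝ)^(-(j':ℤ))*((k':ℝ)+1)), |x - c| ≤ 2*h) →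
      |cellAvg g j' k'| ≤ 8 * M * h^3 := by
    intro j' k' hx
    refine cellAvg_abs_le _ _ _ _ (fun x hmem => ?_)
    refine le_trans (hgb x) ?_
    have h2 : |x - c|^3 ≤ (2*h)^3 := by
      have := hx x hmem
      exact pow_le_pow_left₀ (abs_nonneg _) this 3
    calc M * |x-c|^3 ≤ M * (2*h)^3 := mul_le_mul_of_nonneg_left h2 hM0
      _ = 8*M*h^3 := by ring
  -- bounds on the five cells
  have b1 : |cellAvg (g) (j+1) (2*k)| ≤ 8*M*h^3 := by
    refine key (j+1) (2*k) (fun x hmem => ?_)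
    rw [hstep] at hmem
    push_cast at hmem
    refine mem_uIoc_bound hmem (by nlinarith) (by rw [hc]; push_cast; nlinarith) (by rw [hc]; push_cast; nlinarith)
  have b2 : |cellAvg (g) (j+1) (2*k+1)| ≤ 8*M*h^3 := by
    refine key (j+1) (2*k+1) (fun x hmem => ?_)
    rw [hstep] at hmem
    push_cast at hmem
    refine mem_uIoc_bound hmem (by nlinarith) (by rw [hc]; push_cast; nlinarith) (by rw [hc]; push_cast; nlinarith)
  have b3 : |cellAvg (g) j k| ≤ 8*M*h^3 := by
    refine key j k (fun x hmem => ?_)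
    rw [← hh] at hmem
    refine mem_uIoc_bound hmem (by nlinarith) (by rw [hc]; nlinarith) (by rw [hc]; nlinarith)
  have b4 : |cellAvg (g) j (k-1)| ≤ 8*M*h^3 := by
    refine key j (k-1) (fun x hmem => ?_)
    rw [← hh] at hmem
    push_cast at hmem
    refine mem_uIoc_bound hmem (by nlinarith) (by rw [hc]; nlinarith) (by rw [hc]; nlinarith)
  have b5 : |cellAvg (g) j (k+1)| ≤ 8*M*h^3 := by
    refine key j (k+1) (fun x hmem => ?_)
    rw [← hh] at hmem
    push_cast at hmem
    refine mem_uIoc_bound hmem (by nlinarith) (by rw [hc]; nlinarith) (by rw [hc]; nlinarith)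
  obtain ⟨dq1, dq2⟩ := detail_quad aa bb ee j k
  rw [← hq] at dq1 dq2
  have hs1 := hsub (j+1) (2*k)
  have hs1' := hsub (j+1) (2*k+1)
  have hs2 := hsub j k
  have hs3 := hsub j (k-1)
  have hs4 := hsub j (k+1)
  have hpow : h^3 = (2:ℝ)^(-(3 * j : ℤ)) := by
    rw [hh, ← zpow_natCast ((2:ℝ)^(-(j:ℤ))) 3, ← zpow_mul]
    congr 1
    push_cast
    ring
  obtain ⟨l1, r1⟩ := abs_le.mp b1
  obtain ⟨l1', r1'⟩ := abs_le.mp b2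
  obtain ⟨l3, r3⟩ := abs_le.mp b3
  obtain ⟨l4, r4⟩ := abs_le.mp b4
  obtain ⟨l5, r5⟩ := abs_le.mp b5
  rw [← hpow]
  constructor
  · rw [abs_le]
    constructor <;>
      linarith only [hs1, hs2, hs3, hs4, dq1, l1, r1, l3, r3, l4, r4, l5, r5, hM0, h0,
        mul_nonneg (mul_nonneg (by norm_num : (0:ℝ) ≤ 8) hM0) (pow_nonneg h0.le 3)]
  · rw [abs_le]
    constructor <;>
      linarith only [hs1', hs2, hs3, hs4, dq2, l1', r1', l3, r3, l4, r4, l5, r5, hM0, h0,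
        mul_nonneg (mul_nonneg (by norm_num : (0:ℝ) ≤ 8) hM0) (pow_nonneg h0.le 3)]
end
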